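/- arXiv:1101.4971 — 4 statements merged into one kernel-verified Lean document; each statement's English description precedes it below -/
import Mathlib

section
/- If 0 < θ_i ≤ π/2 for i = 1,...,k with k ≥ 2 and ∑_{i=1}^k θ_i ≥ π/2, then ∑_{i=1}^k sin(θ_i) > 1. -/
open Real

theorem stmt_2 (k : ℕ) (hk : 2 ≤ k) (θ : Fin k → ℝ)
    (hpos : ∀ i, 0 < θ i) (hle : ∀ i, θ i ≤ π / 2)
    (hsum : π / 2 ≤ ∑ i, θ i) :
    1 < ∑ i, sin (θ i) := by
  by_cases h : ∃ j, θ j < π / 2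
  · obtain ⟨j, hj⟩ := h
    have key : ∑ i, 2 / π * θ i < ∑ i, sin (θ i) := by
      apply Finset.sum_lt_sum (fun i _ => Real.mul_le_sin (hpos i).le (hle i))
      exact ⟨j, Finset.mem_univ j, Real.mul_lt_sin (hpos j) hj⟩
    have hπ : 0 < π := Real.pi_pos
    have : (1 : ℝ) ≤ ∑ i, 2 / π * θ i := by
      rw [← Finset.mul_sum]
      rw [div_mul_eq_mul_div, le_div_iff₀ hπ]
      linarith
    linarith
  · push_neg at h
    have heq : ∀ i, θ i = π / 2 := fun i => le_antisymm (hle i) (h i)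
    have : ∑ i, sin (θ i) = (k : ℝ) := by
      simp [heq, Real.sin_pi_div_two]
    rw [this]
    exact_mod_cast lt_of_lt_of_le one_lt_two (by exact_mod_cast hk)
end

section
/- For positive reals d_0, d_1, d_2, set s_i = sinh(d_i/2) and suppose s_i < s_j + s_k for every permutation {i,j,k} of {0,1,2}. Then J defined by sinh(J) = 2 s_0 s_1 s_2 / sqrt((s_0+s_1+s_2)(−s_0+s_1+s_2)(s_0−s_1+s_2)(s_0+s_1−s_2)) satisfies sinh(J) ≥ s_i for each i, i.e. J ≥ d_i/2 for each i. -/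
open Real

theorem stmt_11 (d₀ d₁ d₂ J : ℝ) (h₀ : 0 < d₀) (h₁ : 0 < d₁) (h₂ : 0 < d₂)
    (s₀ : ℝ) (s₁ : ℝ) (s₂ : ℝ)
    (hs₀ : s₀ = sinh (d₀ / 2)) (hs₁ : s₁ = sinh (d₁ / 2)) (hs₂ : s₂ = sinh (d₂ / 2))
    (ht₀ : s₀ < s₁ + s₂) (ht₁ : s₁ < s₀ + s₂) (ht₂ : s₂ < s₀ + s₁)
    (hJ : sinh J = 2 * s₀ * s₁ * s₂ /
      Real.sqrt ((s₀ + s₁ + s₂) * (-s₀ + s₁ + s₂) * (s₀ - s₁ + s₂) * (s₀ + s₁ - s₂))) :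
    J ≥ d₀ / 2 ∧ J ≥ d₁ / 2 ∧ J ≥ d₂ / 2 := by
  have hp₀ : 0 < s₀ := hs₀ ▸ Real.sinh_pos_iff.2 (by linarith)
  have hp₁ : 0 < s₁ := hs₁ ▸ Real.sinh_pos_iff.2 (by linarith)
  have hp₂ : 0 < s₂ := hs₂ ▸ Real.sinh_pos_iff.2 (by linarith)
  set Q := (s₀ + s₁ + s₂) * (-s₀ + s₁ + s₂) * (s₀ - s₁ + s₂) * (s₀ + s₁ - s₂) with hQ
  have hQpos : 0 < Q := by
    apply mul_pos
    apply mul_pos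
    apply mul_pos <;> linarith
    all_goals linarith
  have hsq : 0 < Real.sqrt Q := Real.sqrt_pos.mpr hQpos
  have key : ∀ a b c : ℝ, 0 < a → 0 < b → 0 < c →
      a * b * c = s₀ * s₁ * s₂ →
      Q ≤ (2 * b * c) ^ 2 →
      a ≤ sinh J := by
    intro a b c ha hb hc habc hle
    have h1 : Real.sqrt Q ≤ 2 * b * c := by
      rw [show (2:ℝ) * b * c = Real.sqrt ((2 * b * c) ^ 2) from
        (Real.sqrt_sq (by positivity)).symm]
      exact Real.sqrt_le_sqrt hle
    rw [hJ]
    rw [le_div_iff₀ hsq]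
    nlinarith [hsq, mul_pos hb hc, mul_le_mul_of_nonneg_left h1 ha.le]
  have k₀ : s₀ ≤ sinh J := by
    apply key s₀ s₁ s₂ hp₀ hp₁ hp₂ (by ring) ?_
    nlinarith [sq_nonneg (s₀^2 - s₁^2 - s₂^2)]
  have k₁ : s₁ ≤ sinh J := by
    apply key s₁ s₀ s₂ hp₁ hp₀ hp₂ (by ring) ?_
    nlinarith [sq_nonneg (s₁^2 - s₀^2 - s₂^2)]
  have k₂ : s₂ ≤ sinh J := by
    apply key s₂ s₀ s₁ hp₂ hp₀ hp₁ (by ring) ?_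
    nlinarith [sq_nonneg (s₂^2 - s₀^2 - s₁^2)]
  refine ⟨?_, ?_, ?_⟩
  · exact Real.sinh_le_sinh.mp (by rw [← hs₀]; exact k₀)
  · exact Real.sinh_le_sinh.mp (by rw [← hs₁]; exact k₁)
  · exact Real.sinh_le_sinh.mp (by rw [← hs₂]; exact k₂)
end

section
/- Fix d > 0 and 0 ≤ R ≤ d/2. The function f(n) = π − (2π/n) − 2·cosh(R)·arcsin(cos(π/n)/cosh(d/2)) is strictly increasing in real n ≥ 3; equivalently, D_{R,n}(d)/n is strictly increasing in n, where D_{R,n}(d) = (n−2)π − 2n·cosh(R)·arcsin(cos(π/n)/cosh(d/2)). -/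
open Real

theorem stmt_16 (d R : ℝ) (hd : 0 < d) (hR0 : 0 ≤ R) (hR : R ≤ d / 2) :
    StrictMonoOn (fun n : ℝ =>
        π - 2 * π / n - 2 * cosh R * arcsin (cos (π / n) / cosh (d / 2)))
      (Set.Ici (3 : ℝ)) := by
  have hc1 : 1 < Real.cosh (d / 2) := by
    rw [Real.one_lt_cosh]; positivity
  set c := Real.cosh (d / 2) with hc
  have hc0 : (0 : ℝ) < c := lt_trans one_pos hc1
  have key : ∀ x : ℝ, 3 ≤ x → HasDerivAt
      (fun n : ℝ => π - 2 * π / n - 2 * Real.cosh R * Real.arcsin (Real.cos (π / n) / c))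
      (0 - 2 * π * -(x ^ 2)⁻¹ - 2 * Real.cosh R *
        (1 / Real.sqrt (1 - (Real.cos (π / x) / c) ^ 2) *
          (-Real.sin (π / x) * (π * -(x ^ 2)⁻¹) / c))) x := by
    intro x hx
    have hx0 : (0 : ℝ) < x := by linarith
    have hxne : x ≠ 0 := ne_of_gt hx0
    have hcospos : 0 < Real.cos (π / x) := by
      apply Real.cos_pos_of_mem_Ioo
      constructor
      · have h1 : 0 < π / x := div_pos Real.pi_pos hx0
        have := Real.pi_pos
        linarith
      · have h2 : π / x ≤ π / 3 := by gcongr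
        have := Real.pi_pos
        linarith
    have hu1 : Real.cos (π / x) / c < 1 := by
      rw [div_lt_one hc0]
      exact lt_of_le_of_lt (Real.cos_le_one _) hc1
    have hu0 : 0 < Real.cos (π / x) / c := div_pos hcospos hc0
    have h1 : HasDerivAt (fun n : ℝ => π / n) (π * -(x ^ 2)⁻¹) x := by
      simpa [div_eq_mul_inv] using (hasDerivAt_inv hxne).const_mul π
    have h2 : HasDerivAt (fun n : ℝ => Real.cos (π / n))
        (-Real.sin (π / x) * (π * -(x ^ 2)⁻¹)) x :=
      (Real.hasDerivAt_cos (π / x)).comp x h1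
    have h3 : HasDerivAt (fun n : ℝ => Real.cos (π / n) / c)
        (-Real.sin (π / x) * (π * -(x ^ 2)⁻¹) / c) x := h2.div_const c
    have h4 : HasDerivAt (fun n : ℝ => Real.arcsin (Real.cos (π / n) / c))
        (1 / Real.sqrt (1 - (Real.cos (π / x) / c) ^ 2) *
          (-Real.sin (π / x) * (π * -(x ^ 2)⁻¹) / c)) x :=
      (Real.hasDerivAt_arcsin (by linarith) (ne_of_lt hu1)).comp (h₂ := Real.arcsin) x h3
    have h5 : HasDerivAt (fun n : ℝ => 2 * π / n) (2 * π * -(x ^ 2)⁻¹) x := by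
      simpa [div_eq_mul_inv] using (hasDerivAt_inv hxne).const_mul (2 * π)
    exact ((hasDerivAt_const x π).sub h5).sub (h4.const_mul (2 * Real.cosh R))
  apply strictMonoOn_of_deriv_pos (convex_Ici 3)
  · intro x hx
    exact ((key x hx).differentiableAt).continuousAt.continuousWithinAt
  · intro x hx
    rw [interior_Ici] at hx
    have hx3 : (3 : ℝ) ≤ x := le_of_lt hx
    rw [(key x hx3).deriv]
    have hx0 : (0 : ℝ) < x := by linarith
    have hcospos : 0 < Real.cos (π / x) := by
      apply Real.cos_pos_of_mem_Ioo
      constructor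
      · have h1 : 0 < π / x := div_pos Real.pi_pos hx0
        have := Real.pi_pos
        linarith
      · have h2 : π / x ≤ π / 3 := by gcongr
        have := Real.pi_pos
        linarith
    have hsinpos : 0 < Real.sin (π / x) := by
      apply Real.sin_pos_of_pos_of_lt_pi (div_pos Real.pi_pos hx0)
      have h2 : π / x ≤ π / 3 := by gcongr
      have := Real.pi_pos
      linarith
    have hcos1 : Real.cos (π / x) ≤ 1 := Real.cos_le_one _
    have hsin1 : Real.sin (π / x) ≤ 1 := Real.sin_le_one _
    have hu0 : 0 < Real.cos (π / x) / c := div_pos hcospos hc0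
    have hu1 : Real.cos (π / x) / c < 1 := by
      rw [div_lt_one hc0]
      exact lt_of_le_of_lt hcos1 hc1
    have harg : 0 < 1 - (Real.cos (π / x) / c) ^ 2 := by nlinarith
    set s := Real.sqrt (1 - (Real.cos (π / x) / c) ^ 2) with hs
    have hs0 : 0 < s := Real.sqrt_pos.2 harg
    have hs2 : s ^ 2 = 1 - (Real.cos (π / x) / c) ^ 2 := Real.sq_sqrt harg.le
    have hcoshR : Real.cosh R ≤ c := by
      rw [hc, Real.cosh_le_cosh, abs_of_nonneg hR0, abs_of_nonneg (by linarith)]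
      exact hR
    have hcoshR1 : 1 ≤ Real.cosh R := Real.one_le_cosh R
    have hpyth : Real.sin (π / x) ^ 2 + Real.cos (π / x) ^ 2 = 1 :=
      Real.sin_sq_add_cos_sq _
    -- key inequality : cosh R * sin < c * s
    have hkey : Real.cosh R * Real.sin (π / x) < c * s := by
      apply lt_of_pow_lt_pow_left₀ 2 (mul_nonneg hc0.le hs0.le)
      have hcs2 : (c * s) ^ 2 = c ^ 2 - Real.cos (π / x) ^ 2 := by
        rw [mul_pow, hs2]
        field_simp
      rw [hcs2]
      have hsq : Real.cosh R ^ 2 ≤ c ^ 2 := by nlinarith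
      have hA : Real.cosh R ^ 2 * Real.sin (π / x) ^ 2 ≤ c ^ 2 * Real.sin (π / x) ^ 2 :=
        mul_le_mul_of_nonneg_right hsq (sq_nonneg _)
      have hB : 0 < (c ^ 2 - 1) * Real.cos (π / x) ^ 2 :=
        mul_pos (by nlinarith) (pow_pos hcospos 2)
      nlinarith [hA, hB, hpyth]
    have hx2 : (0 : ℝ) < x ^ 2 := by positivity
    have hD : 0 - 2 * π * -(x ^ 2)⁻¹ - 2 * Real.cosh R *
        (1 / s * (-Real.sin (π / x) * (π * -(x ^ 2)⁻¹) / c)) =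
        2 * π / x ^ 2 * ((c * s - Real.cosh R * Real.sin (π / x)) / (c * s)) := by
      field_simp
      ring
    rw [hD]
    have := Real.pi_pos
    exact mul_pos (by positivity) (div_pos (sub_pos.2 hkey) (mul_pos hc0 hs0))
end

section
/- For d > 0 and J ≥ d/2, with α = arccos(1 − 2 sinh(d/2)^2/sinh(J)^2) and β = arccos(tanh(d/2)/tanh(J)), one has sin(β) = 2·sinh(d/2)·cos(α/2)/sinh(d), equivalently sin(β)·cosh(d/2) = cos(α/2). -/
open Real

theorem stmt_18 (d J : ℝ) (hd : 0 < d) (hJ : d / 2 ≤ J) :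
    sin (arccos (tanh (d / 2) / tanh J)) =
      2 * sinh (d / 2) * cos (arccos (1 - 2 * sinh (d / 2) ^ 2 / sinh J ^ 2) / 2) / sinh d ∧
    sin (arccos (tanh (d / 2) / tanh J)) * cosh (d / 2) =
      cos (arccos (1 - 2 * sinh (d / 2) ^ 2 / sinh J ^ 2) / 2) := by
  have hd2 : 0 < d / 2 := by linarith
  have hJ0 : 0 < J := lt_of_lt_of_le hd2 hJ
  have hs : 0 < sinh (d / 2) := sinh_pos_iff.mpr hd2
  have hS : 0 < sinh J := sinh_pos_iff.mpr hJ0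
  have hc : 0 < cosh (d / 2) := cosh_pos _
  have hC : 0 < cosh J := cosh_pos _
  have hsS : sinh (d / 2) ≤ sinh J := sinh_le_sinh.mpr hJ
  have hsS2 : sinh (d / 2) ^ 2 ≤ sinh J ^ 2 := by nlinarith
  have hratio : 0 ≤ 1 - sinh (d / 2) ^ 2 / sinh J ^ 2 := by
    rw [sub_nonneg, div_le_one (by positivity)]; exact hsS2
  have hy1 : -1 ≤ 1 - 2 * sinh (d / 2) ^ 2 / sinh J ^ 2 := by
    have : 2 * sinh (d / 2) ^ 2 / sinh J ^ 2 ≤ 2 := by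
      rw [div_le_iff₀ (by positivity)]; nlinarith
    linarith
  have hy2 : 1 - 2 * sinh (d / 2) ^ 2 / sinh J ^ 2 ≤ 1 := by
    have : 0 ≤ 2 * sinh (d / 2) ^ 2 / sinh J ^ 2 := by positivity
    linarith
  have hcos : cos (arccos (1 - 2 * sinh (d / 2) ^ 2 / sinh J ^ 2) / 2)
      = Real.sqrt (1 - sinh (d / 2) ^ 2 / sinh J ^ 2) := by
    rw [cos_half (by linarith [arccos_nonneg (1 - 2 * sinh (d / 2) ^ 2 / sinh J ^ 2),
        Real.pi_pos]) (arccos_le_pi _), cos_arccos hy1 hy2]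
    congr 1
    ring
  have hsin : sin (arccos (tanh (d / 2) / tanh J))
      = Real.sqrt (1 - sinh (d / 2) ^ 2 / sinh J ^ 2) / cosh (d / 2) := by
    rw [sin_arccos]
    rw [show (1 : ℝ) - (tanh (d/2) / tanh J)^2
        = (1 - sinh (d / 2) ^ 2 / sinh J ^ 2) / cosh (d/2) ^ 2 from ?_]
    · rw [Real.sqrt_div hratio, Real.sqrt_sq hc.le]
    · rw [tanh_eq_sinh_div_cosh, tanh_eq_sinh_div_cosh]
      have h1 := Real.cosh_sq (d/2)
      have h2 := Real.cosh_sq J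
      field_simp
      linear_combination (sinh J ^ 2 * h1 - sinh (d / 2) ^ 2 * h2)
  constructor
  · rw [hsin, hcos, show d = 2 * (d/2) by ring, sinh_two_mul]
    field_simp
  · rw [hsin, hcos]
    field_simp
end
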